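/- Let E be a real inner product space, let r_t : E → ℝ (for integers t, with r_s ≡ 0 for s ≤ 0) be differentiable functions, let w ≥ 1, T ≥ 1 be integers and δ ≥ 0, and let m(·; t) : E → E for t ∈ {1,…,T} be arbitrary gradient generators. Define u_{w,t}(θ) = (1/w) · Σ_{i=0}^{w-1} r_{t-i}(θ) and the smoothed generator m̄(θ; t) = (1/w) · (m(θ; t) + Σ_{i=1}^{w-1} ∇r_{t-i}(θ)). Suppose θ_1,…,θ_T ∈ E satisfy the termination condition ‖m̄(θ_t; t)‖ ≤ δ for every t ∈ {1,…,T}, and suppose Q_1,…,Q_T ≥ 0 satisfy ‖∇r_t(θ) − m(θ; t)‖² ≤ Q_t for all θ ∈ E and t ∈ {1,…,T}. Then (1/T) · Σ_{t=1}^T ‖∇u_{w,t}(θ_t)‖² ≤ 2δ² + (2/w²) · (1/T) · Σ_{t=1}^T Q_t. -/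

import Mathlib

/-- **Theorem 1** (regret of Meta Gradient Descent): if the iterates satisfy the
termination condition `‖m̄(θ_t; t)‖ ≤ δ` and the forecast error of the gradient
generator is bounded by `Q t`, then the average `w`-local regret is at most
`2δ² + (2/w²)·(1/T)·∑ Q t`. -/
theorem meta_gradient_descent_regret
    {E : Type*} [NormedAddCommGroup E] [InnerProductSpace ℝ E] [CompleteSpace E]
    (r : ℤ → E → ℝ) (hrdiff : ∀ t : ℤ, Differentiable ℝ (r t))
    (hr0 : ∀ s : ℤ, s ≤ 0 → r s = 0)
    (w T : ℕ) (hw : 1 ≤ w) (hT : 1 ≤ T)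
    (δ : ℝ) (hδ : 0 ≤ δ)
    (m : ℤ → E → E)
    (u : ℤ → E → ℝ)
    (hu : ∀ (t : ℤ) (θ : E),
      u t θ = (1 / (w : ℝ)) * ∑ i ∈ Finset.range w, r (t - i) θ)
    (mbar : ℤ → E → E)
    (hmbar : ∀ (t : ℤ) (θ : E),
      mbar t θ = (1 / (w : ℝ)) •
        (m t θ + ∑ i ∈ Finset.Icc 1 (w - 1), gradient (r (t - i)) θ))
    (θ : ℤ → E)
    (hterm : ∀ t ∈ Finset.Icc (1 : ℤ) (T : ℤ), ‖mbar t (θ t)‖ ≤ δ)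
    (Q : ℤ → ℝ)
    (hQnonneg : ∀ t ∈ Finset.Icc (1 : ℤ) (T : ℤ), 0 ≤ Q t)
    (hQ : ∀ t ∈ Finset.Icc (1 : ℤ) (T : ℤ), ∀ x : E,
      ‖gradient (r t) x - m t x‖ ^ 2 ≤ Q t) :
    (1 / (T : ℝ)) * ∑ t ∈ Finset.Icc (1 : ℤ) (T : ℤ), ‖gradient (u t) (θ t)‖ ^ 2
      ≤ 2 * δ ^ 2
        + (2 / (w : ℝ) ^ 2) *
            ((1 / (T : ℝ)) * ∑ t ∈ Finset.Icc (1 : ℤ) (T : ℤ), Q t) := by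
  have hwpos : (0 : ℝ) < (w : ℝ) := by exact_mod_cast hw
  have hTpos : (0 : ℝ) < (T : ℝ) := by exact_mod_cast hT
  -- gradient of u
  have hgradu : ∀ (t : ℤ) (x : E),
      gradient (u t) x
        = (1 / (w : ℝ)) • ∑ i ∈ Finset.range w, gradient (r (t - i)) x := by
    intro t x
    have h1 : ∀ i ∈ Finset.range w,
        HasFDerivAt (fun y => r (t - i) y)
          (InnerProductSpace.toDual ℝ E (gradient (r (t - i)) x)) x := by
      intro i _
      exact ((hrdiff (t - i)).differentiableAt.hasGradientAt).hasFDerivAt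
    have h2 := (HasFDerivAt.fun_sum h1).const_mul (1 / (w : ℝ))
    have h3 : HasFDerivAt (u t)
        ((1 / (w : ℝ)) • ∑ i ∈ Finset.range w,
          InnerProductSpace.toDual ℝ E (gradient (r (t - i)) x)) x := by
      refine h2.congr_of_eventuallyEq ?_
      filter_upwards with y
      rw [hu]
    have h4 : ((1 / (w : ℝ)) • ∑ i ∈ Finset.range w,
          InnerProductSpace.toDual ℝ E (gradient (r (t - i)) x))
        = InnerProductSpace.toDual ℝ E
            ((1 / (w : ℝ)) • ∑ i ∈ Finset.range w, gradient (r (t - i)) x) := by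
      rw [map_smul, map_sum]
    rw [h4] at h3
    exact ((hasGradientAt_iff_hasFDerivAt).2 h3).gradient
  -- split range
  have hsplit : Finset.range w = insert 0 (Finset.Icc 1 (w - 1)) := by
    ext i
    simp only [Finset.mem_range, Finset.mem_insert, Finset.mem_Icc]
    omega
  have h0notin : (0 : ℕ) ∉ Finset.Icc 1 (w - 1) := by simp
  -- pointwise decomposition
  have hdecomp : ∀ t : ℤ,
      gradient (u t) (θ t)
        = mbar t (θ t) + (1 / (w : ℝ)) • (gradient (r t) (θ t) - m t (θ t)) := by
    intro t
    rw [hgradu, hmbar, hsplit, Finset.sum_insert h0notin]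
    push_cast
    rw [sub_zero]
    module
  -- pointwise bound
  have hpt : ∀ t ∈ Finset.Icc (1 : ℤ) (T : ℤ),
      ‖gradient (u t) (θ t)‖ ^ 2 ≤ 2 * δ ^ 2 + (2 / (w : ℝ) ^ 2) * Q t := by
    intro t ht
    have hb : ‖gradient (u t) (θ t)‖
        ≤ ‖mbar t (θ t)‖ + ‖(1 / (w : ℝ)) • (gradient (r t) (θ t) - m t (θ t))‖ := by
      rw [hdecomp t]; exact norm_add_le _ _
    have hs : ‖(1 / (w : ℝ)) • (gradient (r t) (θ t) - m t (θ t))‖ ^ 2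
        = (1 / (w : ℝ) ^ 2) * ‖gradient (r t) (θ t) - m t (θ t)‖ ^ 2 := by
      rw [norm_smul]
      rw [Real.norm_eq_abs, abs_of_pos (by positivity)]
      ring
    have h1 := hterm t ht
    have h2 := hQ t ht (θ t)
    have h3 : (0:ℝ) ≤ ‖mbar t (θ t)‖ := norm_nonneg _
    have h4 : (0:ℝ) ≤ ‖(1 / (w : ℝ)) • (gradient (r t) (θ t) - m t (θ t))‖ :=
      norm_nonneg _
    have h5 : ‖gradient (u t) (θ t)‖ ^ 2
        ≤ 2 * ‖mbar t (θ t)‖ ^ 2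
          + 2 * ‖(1 / (w : ℝ)) • (gradient (r t) (θ t) - m t (θ t))‖ ^ 2 := by
      nlinarith [hb, norm_nonneg (gradient (u t) (θ t)),
        sq_nonneg (‖mbar t (θ t)‖ - ‖(1 / (w : ℝ)) • (gradient (r t) (θ t) - m t (θ t))‖)]
    have h6 : (1 / (w : ℝ) ^ 2) * ‖gradient (r t) (θ t) - m t (θ t)‖ ^ 2
        ≤ (1 / (w : ℝ) ^ 2) * Q t := by
      apply mul_le_mul_of_nonneg_left h2 (by positivity)
    have h7 : (2:ℝ) / (w : ℝ) ^ 2 * Q t = 2 * ((1 / (w : ℝ) ^ 2) * Q t) := by ring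
    nlinarith [mul_self_le_mul_self h3 h1, h5, hs, h6, h7]
  -- sum up
  have hsum : ∑ t ∈ Finset.Icc (1 : ℤ) (T : ℤ), ‖gradient (u t) (θ t)‖ ^ 2
      ≤ ∑ t ∈ Finset.Icc (1 : ℤ) (T : ℤ), (2 * δ ^ 2 + (2 / (w : ℝ) ^ 2) * Q t) :=
    Finset.sum_le_sum hpt
  have hcard : (Finset.Icc (1 : ℤ) (T : ℤ)).card = T := by
    rw [Int.card_Icc]; simp
  rw [Finset.sum_add_distrib, Finset.sum_const, ← Finset.mul_sum, hcard] at hsum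
  have := mul_le_mul_of_nonneg_left hsum (le_of_lt (one_div_pos.2 hTpos))
  calc (1 / (T : ℝ)) * ∑ t ∈ Finset.Icc (1 : ℤ) (T : ℤ), ‖gradient (u t) (θ t)‖ ^ 2
      ≤ (1 / (T : ℝ)) * ((T : ℝ) * (2 * δ ^ 2)
          + (2 / (w : ℝ) ^ 2) * ∑ t ∈ Finset.Icc (1 : ℤ) (T : ℤ), Q t) := by
        convert this using 2
        push_cast
        · rfl
        · simp [nsmul_eq_mul]
    _ = 2 * δ ^ 2 + (2 / (w : ℝ) ^ 2) *
          ((1 / (T : ℝ)) * ∑ t ∈ Finset.Icc (1 : ℤ) (T : ℤ), Q t) := by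
        field_simp
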